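/- Let (q,t,ε) be a good triple with q > t ≥ 2. Let δ ∈ {0,1} with δ ≡ t (mod 2), t₁ = t−1+δ and t₂ = t−δ. Then M_{q,t,ε} = max{ (t₂+1)(q−1)/(1−2ε), t₁(t₁+1)(q−1)/(q−(1+2ε)t₁) }. -/

import Mathlib

/-- `(q,t,ε)` is a good triple. -/
def GoodTriple (q t : ℕ) (ε : ℝ) : Prop :=
  ∀ t' : ℕ, 2 ≤ t' → t' ≤ t →
    ∃ s : ℕ, 1 ≤ s ∧ s ≤ t' ∧
      (t' : ℝ) / 2 - (1 - 2 * ε) * (t' : ℝ) / (2 * (q : ℝ)) < (s : ℝ) ∧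
      (s : ℝ) < (t' : ℝ) / 2 + 1 - (1 + 2 * ε) * (t' : ℝ) / (2 * (q : ℝ))

/-- `M_{q,t,ε}`: the maximum over `2 ≤ t' ≤ t` of
`t'(t'+1)(q−1)/(2 s_{t'} q − t'(q−1+2ε))` and `t'(t'+1)(q−1)/(t'(q−1−2ε) − 2(s_{t'}−1)q)`,
where `s_{t'}` is the (unique, for a good triple) integer in `[1,t']` lying in the
interval `(t'/2 − (1−2ε)t'/(2q), t'/2 + 1 − (1+2ε)t'/(2q))`. -/
noncomputable def Mval (q t : ℕ) (ε : ℝ) : ℝ :=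
  sSup {M : ℝ | ∃ t' s : ℕ, 2 ≤ t' ∧ t' ≤ t ∧ 1 ≤ s ∧ s ≤ t' ∧
    ((t' : ℝ) / 2 - (1 - 2 * ε) * (t' : ℝ) / (2 * (q : ℝ)) < (s : ℝ) ∧
      (s : ℝ) < (t' : ℝ) / 2 + 1 - (1 + 2 * ε) * (t' : ℝ) / (2 * (q : ℝ))) ∧
    (M = (t' : ℝ) * ((t' : ℝ) + 1) * ((q : ℝ) - 1) /
        (2 * (s : ℝ) * (q : ℝ) - (t' : ℝ) * ((q : ℝ) - 1 + 2 * ε)) ∨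
     M = (t' : ℝ) * ((t' : ℝ) + 1) * ((q : ℝ) - 1) /
        ((t' : ℝ) * ((q : ℝ) - 1 - 2 * ε) - 2 * ((s : ℝ) - 1) * (q : ℝ)))}


set_option maxHeartbeats 8000000 in
theorem stmt10 (q t : ℕ) (ht : 2 ≤ t) (htq : t < q)
    (ε : ℝ) (hε0 : 0 < ε) (hε : ε < min ((q : ℝ) / (2 * (t : ℝ))) (1 / 2))
    (hgood : GoodTriple q t ε)
    (δ : ℕ) (hδ01 : δ = 0 ∨ δ = 1) (hδ : δ % 2 = t % 2) :
    Mval q t ε =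
      max ((((t : ℝ) - (δ : ℝ)) + 1) * ((q : ℝ) - 1) / (1 - 2 * ε))
        (((t : ℝ) - 1 + (δ : ℝ)) * (((t : ℝ) - 1 + (δ : ℝ)) + 1) * ((q : ℝ) - 1) /
          ((q : ℝ) - (1 + 2 * ε) * ((t : ℝ) - 1 + (δ : ℝ)))) := by
  have hδval : δ = t % 2 := by omega
  have hq3 : 3 ≤ q := by omega
  have hε2 : 2 * ε < 1 := by
    have h := lt_min_iff.mp hε
    linarith [h.2]
  have hQ3 : (3:ℝ) ≤ (q:ℝ) := by exact_mod_cast hq3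
  have hQ1 : (1:ℝ) < (q:ℝ) := by linarith
  have hT2 : (2:ℝ) ≤ (t:ℝ) := by exact_mod_cast ht
  have hTQ : (t:ℝ) < (q:ℝ) := by exact_mod_cast htq
  have hQ0 : (0:ℝ) < 2*(q:ℝ) := by linarith
  -- parity of s
  have key : ∀ t' s : ℕ, 2 ≤ t' → t' ≤ t →
      ((t' : ℝ) / 2 - (1 - 2*ε) * (t' : ℝ) / (2*(q:ℝ)) < (s:ℝ)) →
      ((s:ℝ) < (t' : ℝ) / 2 + 1 - (1 + 2*ε) * (t' : ℝ) / (2*(q:ℝ))) →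
      2*s = t' ∨ 2*s = t' + 1 := by
    intro t' s h2 hle h1 hub
    have hu2 : (2:ℝ) ≤ (t':ℝ) := by exact_mod_cast h2
    have huT : (t':ℝ) ≤ (t:ℝ) := by exact_mod_cast hle
    have huQ : (t':ℝ) < (q:ℝ) := by linarith
    have ha : (1 - 2*ε) * (t':ℝ) / (2*(q:ℝ)) < 1/2 := by
      rw [div_lt_iff₀ hQ0]; nlinarith
    have hb : 0 < (1 + 2*ε) * (t':ℝ) / (2*(q:ℝ)) := by
      apply div_pos ?_ hQ0; nlinarith
    have h1' : (t':ℝ) < 2*(s:ℝ) + 1 := by linarith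
    have h2' : 2*(s:ℝ) < (t':ℝ) + 2 := by linarith
    have hA : t' < 2*s + 1 := by exact_mod_cast h1'
    have hB : 2*s < t' + 2 := by exact_mod_cast h2'
    omega
  simp only [Mval]
  set T₁ : ℝ := (t:ℝ) - 1 + (δ:ℝ) with hT₁def
  set T₂ : ℝ := (t:ℝ) - (δ:ℝ) with hT₂def
  set A : ℝ := (T₂ + 1) * ((q : ℝ) - 1) / (1 - 2 * ε) with hAdef
  set B : ℝ := T₁ * (T₁ + 1) * ((q : ℝ) - 1) / ((q : ℝ) - (1 + 2 * ε) * T₁) with hBdef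
  have hδR : (δ:ℝ) ≤ 1 := by exact_mod_cast hδ01.elim (by omega) (by omega : δ = 1 → δ ≤ 1)
  have hδR0 : (0:ℝ) ≤ (δ:ℝ) := Nat.cast_nonneg δ
  have hcast1 : ((t - 1 + δ : ℕ) : ℝ) = T₁ := by
    rw [Nat.cast_add, Nat.cast_sub (by omega : 1 ≤ t)]; norm_num; exact hT₁def.symm
  have hcast2 : ((t - δ : ℕ) : ℝ) = T₂ := by
    rw [Nat.cast_sub (by omega : δ ≤ t)]
  have hT₁2 : (1:ℝ) ≤ T₁ := by rw [hT₁def]; linarith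
  have hT₂2 : (2:ℝ) ≤ T₂ := by
    rw [hT₂def]
    rcases hδ01 with h | h
    · simp [h]; linarith
    · have : 3 ≤ t := by omega
      have : (3:ℝ) ≤ (t:ℝ) := by exact_mod_cast this
      simp [h]; linarith
  have hT₁T : T₁ ≤ (t:ℝ) := by rw [hT₁def]; linarith
  have hT₂T : T₂ ≤ (t:ℝ) := by rw [hT₂def]; linarith
  -- B denominator positive
  have hBden : 0 < (q:ℝ) - (1 + 2*ε) * T₁ := by
    rcases Nat.lt_or_ge t 3 with h3 | h3
    · have ht2 : t = 2 := by omega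
      have hδ0 : δ = 0 := by omega
      rw [hT₁def, ht2, hδ0]
      push_cast
      nlinarith
    · have h2t₁ : 2 ≤ t - 1 + δ := by omega
      have ht₁t : t - 1 + δ ≤ t := by omega
      obtain ⟨s₀, hs₀1, hs₀2, hc1, hc2⟩ := hgood (t - 1 + δ) h2t₁ ht₁t
      have hodd : (t - 1 + δ) % 2 = 1 := by omega
      have hpar := key (t - 1 + δ) s₀ h2t₁ ht₁t hc1 hc2
      have h2s : 2 * s₀ = (t - 1 + δ) + 1 := by omega
      have h2sR : 2 * (s₀:ℝ) = T₁ + 1 := by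
        rw [← hcast1]; exact_mod_cast congrArg (Nat.cast : ℕ → ℝ) h2s
      rw [hcast1] at hc2
      have hx : (1 + 2*ε) * T₁ / (2*(q:ℝ)) < 1/2 := by linarith
      rw [div_lt_iff₀ hQ0] at hx
      nlinarith [hx]
  have hAden : (0:ℝ) < 1 - 2*ε := by linarith
  have hQm1 : (0:ℝ) < (q:ℝ) - 1 := by linarith
  -- the set
  set S := {M : ℝ | ∃ t' s : ℕ, 2 ≤ t' ∧ t' ≤ t ∧ 1 ≤ s ∧ s ≤ t' ∧
    ((t' : ℝ) / 2 - (1 - 2 * ε) * (t' : ℝ) / (2 * (q : ℝ)) < (s : ℝ) ∧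
      (s : ℝ) < (t' : ℝ) / 2 + 1 - (1 + 2 * ε) * (t' : ℝ) / (2 * (q : ℝ))) ∧
    (M = (t' : ℝ) * ((t' : ℝ) + 1) * ((q : ℝ) - 1) /
        (2 * (s : ℝ) * (q : ℝ) - (t' : ℝ) * ((q : ℝ) - 1 + 2 * ε)) ∨
     M = (t' : ℝ) * ((t' : ℝ) + 1) * ((q : ℝ) - 1) /
        ((t' : ℝ) * ((q : ℝ) - 1 - 2 * ε) - 2 * ((s : ℝ) - 1) * (q : ℝ)))} with hSdef
  clear_value T₁ T₂ A B S
  -- upper bound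
  have hub : ∀ M ∈ S, M ≤ max A B := by
    intro M hMS
    rw [hSdef] at hMS
    obtain ⟨t', s, h2, hle, hs1, hst, ⟨hc1, hc2⟩, hM⟩ := hMS
    have hu2 : (2:ℝ) ≤ (t':ℝ) := by exact_mod_cast h2
    have huT : (t':ℝ) ≤ (t:ℝ) := by exact_mod_cast hle
    have huQ : (t':ℝ) < (q:ℝ) := by linarith
    rcases key t' s h2 hle hc1 hc2 with hpar | hpar
    · -- even case: 2s = t'
      have h2sR : 2 * (s:ℝ) = (t':ℝ) := by exact_mod_cast hpar
      have huT₂ : (t':ℝ) ≤ T₂ := by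
        have : t' ≤ t - δ := by omega
        calc (t':ℝ) ≤ ((t - δ : ℕ):ℝ) := by exact_mod_cast this
        _ = T₂ := hcast2
      have hu0 : (0:ℝ) ≤ (t':ℝ) := by linarith
      refine le_trans ?_ (le_max_left A B)
      rcases hM with hM | hM
      · have hden : 2 * (s:ℝ) * (q:ℝ) - (t':ℝ) * ((q:ℝ) - 1 + 2*ε) = (t':ℝ) * (1 - 2*ε) := by
          linear_combination (q:ℝ) * h2sR
        rw [hM, hden, hAdef, div_le_div_iff₀ (by nlinarith) hAden]
        nlinarith [mul_nonneg (mul_nonneg (mul_nonneg hu0 hQm1.le) hAden.le) (sub_nonneg.mpr huT₂)]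
      · have hden : (t':ℝ) * ((q:ℝ) - 1 - 2*ε) - 2 * ((s:ℝ) - 1) * (q:ℝ) = 2*(q:ℝ) - (t':ℝ) * (1 + 2*ε) := by
          linear_combination (-(q:ℝ)) * h2sR
        have hdpos : (0:ℝ) < 2*(q:ℝ) - (t':ℝ) * (1 + 2*ε) := by nlinarith
        rw [hM, hden, hAdef, div_le_div_iff₀ hdpos hAden]
        nlinarith [mul_nonneg (mul_nonneg hQm1.le (sub_nonneg.mpr huT₂)) hdpos.le,
          mul_nonneg (mul_nonneg hQm1.le (by linarith : (0:ℝ) ≤ (t':ℝ)+1)) (by linarith : (0:ℝ) ≤ (q:ℝ) - (t':ℝ))]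
    · -- odd case: 2s = t' + 1
      have h2sR : 2 * (s:ℝ) = (t':ℝ) + 1 := by exact_mod_cast hpar
      have huT₁ : (t':ℝ) ≤ T₁ := by
        have : t' ≤ t - 1 + δ := by omega
        calc (t':ℝ) ≤ ((t - 1 + δ : ℕ):ℝ) := by exact_mod_cast this
        _ = T₁ := hcast1
      have hd2pos : (0:ℝ) < (q:ℝ) - (t':ℝ) * (1 + 2*ε) := by nlinarith
      have hu0 : (0:ℝ) ≤ (t':ℝ) := by linarith
      have hin : (0:ℝ) ≤ (q:ℝ)*(T₁ + (t':ℝ) + 1) - (1+2*ε)*(t':ℝ)*T₁ := by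
        nlinarith [mul_nonneg hBden.le hu0]
      have hkey : (0:ℝ) ≤ ((q:ℝ)-1) * (T₁ - (t':ℝ)) * ((q:ℝ)*(T₁ + (t':ℝ) + 1) - (1+2*ε)*(t':ℝ)*T₁) :=
        mul_nonneg (mul_nonneg hQm1.le (sub_nonneg.mpr huT₁)) hin
      have hkey2 : (0:ℝ) ≤ ((q:ℝ)-1) * T₁ * (T₁+1) * (2*(t':ℝ)) :=
        mul_nonneg (mul_nonneg (mul_nonneg hQm1.le (by linarith)) (by linarith)) (by linarith)
      refine le_trans ?_ (le_max_right A B)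
      rcases hM with hM | hM
      · have hden : 2 * (s:ℝ) * (q:ℝ) - (t':ℝ) * ((q:ℝ) - 1 + 2*ε) = (q:ℝ) + (t':ℝ) * (1 - 2*ε) := by
          linear_combination (q:ℝ) * h2sR
        rw [hM, hden, hBdef, div_le_div_iff₀ (by nlinarith) hBden]
        nlinarith [hkey, hkey2]
      · have hden : (t':ℝ) * ((q:ℝ) - 1 - 2*ε) - 2 * ((s:ℝ) - 1) * (q:ℝ) = (q:ℝ) - (t':ℝ) * (1 + 2*ε) := by
          linear_combination (-(q:ℝ)) * h2sR
        rw [hM, hden, hBdef, div_le_div_iff₀ hd2pos hBden]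
        nlinarith [hkey]
  -- A ∈ S
  have hAmem : A ∈ S := by
    rw [hSdef]
    refine ⟨t - δ, (t - δ)/2, by omega, by omega, by omega, by omega, ⟨?_, ?_⟩, ?_⟩
    · have h2s : 2 * ((t-δ)/2) = t - δ := by omega
      have h2sR : 2 * (((t-δ)/2 : ℕ):ℝ) = T₂ := by
        rw [← hcast2]; exact_mod_cast congrArg (Nat.cast : ℕ → ℝ) h2s
      rw [hcast2]
      have hpos : 0 < (1 - 2*ε) * T₂ / (2*(q:ℝ)) := div_pos (by nlinarith) hQ0
      linarith
    · have h2s : 2 * ((t-δ)/2) = t - δ := by omega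
      have h2sR : 2 * (((t-δ)/2 : ℕ):ℝ) = T₂ := by
        rw [← hcast2]; exact_mod_cast congrArg (Nat.cast : ℕ → ℝ) h2s
      rw [hcast2]
      have : (1 + 2*ε) * T₂ / (2*(q:ℝ)) < 1 := by
        rw [div_lt_iff₀ hQ0]; nlinarith
      linarith
    · left
      have h2s : 2 * ((t-δ)/2) = t - δ := by omega
      have h2sR : 2 * (((t-δ)/2 : ℕ):ℝ) = T₂ := by
        rw [← hcast2]; exact_mod_cast congrArg (Nat.cast : ℕ → ℝ) h2s
      rw [hcast2]
      have hden : 2 * (((t-δ)/2 : ℕ):ℝ) * (q:ℝ) - T₂ * ((q:ℝ) - 1 + 2*ε) = T₂ * (1 - 2*ε) := by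
        linear_combination (q:ℝ) * h2sR
      rw [hden, hAdef]
      rw [div_eq_div_iff (ne_of_gt hAden) (ne_of_gt (show (0:ℝ) < T₂ * (1 - 2*ε) by nlinarith))]
      ring
  -- B ∈ S when 3 ≤ t
  have hBmem : 3 ≤ t → B ∈ S := by
    intro h3
    rw [hSdef]
    have h2t₁ : 2 ≤ t - 1 + δ := by omega
    refine ⟨t - 1 + δ, (t - 1 + δ + 1)/2, h2t₁, by omega, by omega, by omega, ⟨?_, ?_⟩, ?_⟩
    all_goals {
      have h2s : 2 * ((t - 1 + δ + 1)/2) = t - 1 + δ + 1 := by omega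
      have h2sR : 2 * (((t - 1 + δ + 1)/2 : ℕ):ℝ) = T₁ + 1 := by
        rw [← hcast1]; exact_mod_cast congrArg (Nat.cast : ℕ → ℝ) h2s
      rw [hcast1]
      first
      | ( -- lower
          have : (1 - 2*ε) * T₁ / (2*(q:ℝ)) > 0 := by
            apply div_pos ?_ hQ0; nlinarith
          linarith )
      | ( -- upper
          have hx : (1 + 2*ε) * T₁ / (2*(q:ℝ)) < 1/2 := by
            rw [div_lt_iff₀ hQ0]; nlinarith
          linarith )
      | ( right
          have hden : T₁ * ((q:ℝ) - 1 - 2*ε) - 2 * ((((t - 1 + δ + 1)/2 : ℕ):ℝ) - 1) * (q:ℝ) = (q:ℝ) - (1 + 2*ε) * T₁ := by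
            linear_combination (-(q:ℝ)) * h2sR
          rw [hden, hBdef] )
    }
  -- conclude
  have hmax : max A B ∈ S := by
    rcases Nat.lt_or_ge t 3 with h3 | h3
    · have ht2 : t = 2 := by omega
      have hδ0 : δ = 0 := by omega
      have hT₁1 : T₁ = 1 := by rw [hT₁def, ht2, hδ0]; push_cast; ring
      have hT₂t : T₂ = 2 := by rw [hT₂def, ht2, hδ0]; push_cast; ring
      have hBA : B ≤ A := by
        rw [hT₁1] at hBden
        rw [hAdef, hBdef, hT₁1, hT₂t, div_le_div_iff₀ hBden hAden]
        nlinarith [mul_nonneg hQm1.le (show (0:ℝ) ≤ 3*(q:ℝ) - 5 - 2*ε by nlinarith)]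
      rw [max_eq_left hBA]; exact hAmem
    · rcases le_total A B with h | h
      · rw [max_eq_right h]; exact hBmem h3
      · rw [max_eq_left h]; exact hAmem
  exact IsGreatest.csSup_eq ⟨hmax, hub⟩
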